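/- arXiv:2007.14483 — 2 statements merged into one kernel-verified Lean document; each statement's English description precedes it below -/
import Mathlib

section
/- In a commutative idempotent involutive residuated lattice, the set {0_x | x ∈ A} equals {x | x ≤ 0}, and this set with operations · and ∨ is a distributive sublattice with maximum element 0. -/
/-- A commutative idempotent involutive residuated lattice. -/
class CIdInRL (α : Type*) extends Lattice α, CommMonoid α, Zero α where
  arrow : α → α → α
  residuation : ∀ x y z : α, x * y ≤ z ↔ y ≤ arrow x z
  idem : ∀ x : α, x * x = x
  involutive : ∀ x : α, arrow (arrow x 0) 0 = x

namespace CIdInRL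
variable {α : Type*} [CIdInRL α]
/-- linear negation ¬x := x → 0 -/
def neg (x : α) : α := arrow x 0
/-- 0_x := x ∧ ¬x -/
def zx (x : α) : α := x ⊓ neg x
/-- 1_x := x ∨ ¬x -/
def ox (x : α) : α := x ⊔ neg x
/-- monoidal order x ⊑ y iff x·y = x -/
def mleq (x y : α) : Prop := x * y = x
end CIdInRL

namespace CIdInRL
variable {α : Type*} [CIdInRL α]

lemma mul_le_arrow (x y : α) : y ≤ arrow x (x * y) :=
  (residuation x y (x * y)).mp le_rfl

lemma mul_le_mul_left' (x : α) {y z : α} (h : y ≤ z) : x * y ≤ x * z :=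
  (residuation x y (x * z)).mpr (h.trans (mul_le_arrow x z))

lemma mul_le_mul'' {a b c d : α} (h1 : a ≤ b) (h2 : c ≤ d) : a * c ≤ b * d := by
  calc a * c ≤ a * d := mul_le_mul_left' a h2
    _ = d * a := mul_comm a d
    _ ≤ d * b := mul_le_mul_left' d h1
    _ = b * d := mul_comm d b

lemma mul_neg_le (x : α) : x * neg x ≤ 0 :=
  (residuation x (neg x) 0).mpr le_rfl

lemma neg_antitone {x y : α} (h : x ≤ y) : neg y ≤ neg x :=
  (residuation x (neg y) 0).mp ((mul_le_mul'' h le_rfl).trans (mul_neg_le y))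

lemma le_neg_self_of_le_zero {a : α} (h : a ≤ 0) : a ≤ neg a :=
  (residuation a a 0).mp (by rw [idem]; exact h)

lemma zx_le_zero (x : α) : zx x ≤ 0 := by
  have h1 : zx x ≤ x := inf_le_left
  have h2 : zx x ≤ neg x := inf_le_right
  calc zx x = zx x * zx x := (idem _).symm
    _ ≤ x * neg x := mul_le_mul'' h1 h2
    _ ≤ 0 := mul_neg_le x

lemma zero_le_neg_zero : (0 : α) ≤ neg 0 := le_neg_self_of_le_zero le_rfl

lemma mul_le_zero {a b : α} (ha : a ≤ 0) (hb : b ≤ 0) : a * b ≤ 0 :=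
  (residuation a b 0).mpr (hb.trans (zero_le_neg_zero.trans (neg_antitone ha)))

lemma neg_one : neg (1 : α) = 0 := by
  refine le_antisymm ?_ ?_
  · have := mul_neg_le (1 : α); rwa [one_mul] at this
  · exact (residuation 1 0 0).mp (by rw [one_mul])

lemma zero_le_one : (0 : α) ≤ 1 := by
  have h : neg (1 : α) ≤ neg 0 := by rw [neg_one]; exact zero_le_neg_zero
  have := neg_antitone h
  rwa [neg, neg, neg, neg, involutive, involutive] at this

lemma mul_le_left {a b : α} (hb : b ≤ 1) : a * b ≤ a := by
  have : a * b ≤ a * 1 := mul_le_mul_left' a hb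
  rwa [mul_one] at this

lemma mul_eq_inf {a b : α} (ha : a ≤ 0) (hb : b ≤ 0) : a * b = a ⊓ b := by
  refine le_antisymm (le_inf (mul_le_left (hb.trans zero_le_one)) ?_) ?_
  · rw [mul_comm]; exact mul_le_left (ha.trans zero_le_one)
  · calc a ⊓ b = (a ⊓ b) * (a ⊓ b) := (idem _).symm
      _ ≤ a * b := mul_le_mul'' inf_le_left inf_le_right

lemma mul_sup (a b c : α) : a * (b ⊔ c) = a * b ⊔ a * c := by
  refine le_antisymm ?_ (sup_le (mul_le_mul_left' a le_sup_left)
    (mul_le_mul_left' a le_sup_right))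
  exact (residuation a (b ⊔ c) _).mpr (sup_le
    ((residuation a b _).mp le_sup_left) ((residuation a c _).mp le_sup_right))

end CIdInRL

open CIdInRL in
theorem stmt8 {α : Type*} [CIdInRL α] :
    ({z : α | ∃ x : α, z = zx x} = {z : α | z ≤ 0}) ∧
    (∀ a b : α, a ≤ 0 → b ≤ 0 → a * b ≤ 0 ∧ a ⊔ b ≤ 0) ∧
    ((0 : α) ≤ 0) ∧ (∀ a : α, a ≤ 0 → a ≤ 0) ∧
    (∀ a b : α, a ≤ 0 → b ≤ 0 → a * b = a ⊓ b) ∧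
    (∀ a b c : α, a ≤ 0 → b ≤ 0 → c ≤ 0 → a ⊔ (b * c) = (a ⊔ b) * (a ⊔ c)) := by
  refine ⟨?_, fun a b ha hb => ⟨mul_le_zero ha hb, sup_le ha hb⟩, le_rfl,
    fun a h => h, fun a b ha hb => mul_eq_inf ha hb, ?_⟩
  · ext z
    simp only [Set.mem_setOf_eq]
    constructor
    · rintro ⟨x, rfl⟩; exact zx_le_zero x
    · intro h
      exact ⟨z, by rw [zx, inf_eq_left.mpr (le_neg_self_of_le_zero h)]⟩
  · intro a b c ha hb hc
    have hab : a ⊔ b ≤ 0 := sup_le ha hb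
    have hac : a ⊔ c ≤ 0 := sup_le ha hc
    have hb1 : b ≤ 1 := hb.trans zero_le_one
    have hc1 : c ≤ 1 := hc.trans zero_le_one
    have ha1 : a ≤ 1 := ha.trans zero_le_one
    refine le_antisymm ?_ ?_
    · rw [mul_eq_inf hab hac]
      refine sup_le (le_inf le_sup_left le_sup_left) (le_inf ?_ ?_)
      · exact (mul_le_left hc1).trans le_sup_right
      · exact (mul_comm b c ▸ mul_le_left hb1).trans le_sup_right
    · have expand : (a ⊔ b) * (a ⊔ c) = (a ⊔ b) * a ⊔ (a ⊔ b) * c := mul_sup _ _ _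
      rw [expand]
      refine sup_le ?_ ?_
      · have : (a ⊔ b) * a ≤ a := mul_comm (a ⊔ b) a ▸ mul_le_left (hab.trans zero_le_one)
        exact this.trans le_sup_left
      · rw [mul_comm, CIdInRL.mul_sup]
        refine sup_le ?_ ?_
        · exact (mul_comm c a ▸ mul_le_left hc1).trans le_sup_left
        · exact (mul_comm c b ▸ le_sup_right)
end

section
/- In a commutative idempotent involutive residuated lattice, for a negative element a (a ≤ 1) and any x with x ≤ ¬a, one has (x ∨ a) ∧ ¬a = x ∨ 0_a, where 0_a := a ∧ ¬a. -/
namespace CIdInRL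
variable {α : Type*} [CIdInRL α]

lemma mul_le_mul_right' {x y : α} (h : x ≤ y) (z : α) : z * x ≤ z * y := by
  rw [residuation]
  exact h.trans ((residuation z y (z * y)).mp le_rfl)

lemma mul_le_mul''_s13 {x y u v : α} (h1 : x ≤ u) (h2 : y ≤ v) : x * y ≤ u * v := by
  calc x * y ≤ x * v := mul_le_mul_right' h2 x
    _ = v * x := mul_comm _ _
    _ ≤ v * u := mul_le_mul_right' h1 v
    _ = u * v := mul_comm _ _

lemma mul_sup' (x y z : α) : x * (y ⊔ z) = x * y ⊔ x * z := by
  apply le_antisymm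
  · rw [residuation]
    apply sup_le <;> rw [← residuation]
    · exact le_sup_left
    · exact le_sup_right
  · exact sup_le (mul_le_mul_right' le_sup_left x) (mul_le_mul_right' le_sup_right x)

lemma neg_mul_self_le_zero (a : α) : a * neg a ≤ 0 :=
  (residuation a (neg a) 0).mpr le_rfl

lemma le_of_mul_neg_le {u a : α} (h : u * neg a ≤ 0) : u ≤ a := by
  have := (residuation (neg a) u 0).mp (by rwa [mul_comm])
  rwa [neg, involutive] at this

lemma neg_mul_self_le_self (a : α) : a * neg a ≤ a := by
  apply le_of_mul_neg_le
  calc a * neg a * neg a = a * (neg a * neg a) := mul_assoc _ _ _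
    _ = a * neg a := by rw [idem]
    _ ≤ 0 := neg_mul_self_le_zero a

end CIdInRL

open CIdInRL in
theorem stmt13 {α : Type*} [CIdInRL α] (a x : α) (ha : a ≤ 1) (hx : x ≤ neg a) :
    (x ⊔ a) ⊓ neg a = x ⊔ zx a := by
  set t := (x ⊔ a) ⊓ neg a with ht
  apply le_antisymm
  · have key : t ≤ t * x ⊔ t * a := by
      calc t = t * t := (idem t).symm
        _ ≤ t * (x ⊔ a) := mul_le_mul_right' inf_le_left t
        _ = t * x ⊔ t * a := mul_sup' t x a
    have h1 : t * x ≤ x := by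
      calc t * x ≤ (x ⊔ a) * x := mul_le_mul''_s13 inf_le_left le_rfl
        _ = x * x ⊔ a * x := by rw [mul_comm (x ⊔ a) x, mul_sup' x x a, mul_comm x a]
        _ ≤ x ⊔ 1 * x := sup_le_sup (le_of_eq (idem x)) (mul_le_mul''_s13 ha le_rfl)
        _ = x := by rw [one_mul, sup_idem]
    have h2 : t * a ≤ zx a := by
      have hta : t * a ≤ a * neg a := by
        rw [mul_comm]
        exact mul_le_mul''_s13 le_rfl inf_le_right
      refine le_inf (hta.trans (neg_mul_self_le_self a)) ?_
      calc t * a ≤ neg a * 1 := mul_le_mul''_s13 inf_le_right ha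
        _ = neg a := mul_one _
    exact key.trans (sup_le_sup h1 h2)
  · apply sup_le
    · exact le_inf (le_sup_left.trans (le_refl _)) hx
    · exact le_inf ((inf_le_left).trans le_sup_right) inf_le_right
end
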